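/- Let x = ρ_h B_{rec} > 1. Then ln 𝒩(ℋ_{ESN,t}, ε, ‖·‖) ≤ (ρ_y² ρ_h² B_{in}² B_X² B_{out}² d_y / ε²) · ((x^t − 1)/(x − 1))² · ln(2 d_h d_y), given: σ_h is ρ_h-Lipschitz with σ_h(0)=0, σ_y is ρ_y-Lipschitz with σ_y(0)=0, fixed input and recurrent matrices with ‖W_in‖_F ≤ B_{in}, ‖W_rec‖_F ≤ B_{rec}, trainable W_out with ‖W_out‖_F ≤ B_{out}, inputs bounded by B_X, and Lemma: ln 𝒩({W Z : ‖W‖_F ≤ a}, ε, ‖·‖₂) ≤ (a² b² m / ε²) ln(2dm) whenever ‖Z‖_F ≤ b, W ∈ ℝ^{m×d}. -/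

import Mathlib

/-- Frobenius norm of a real matrix. -/
noncomputable def frob {p q : ℕ} (A : Matrix (Fin p) (Fin q) ℝ) : ℝ :=
  Real.sqrt (∑ i, ∑ j, (A i j) ^ 2)

/-- `S` admits an ε-cover of cardinality `N` in Euclidean norm. -/
def HasCover {m : ℕ} (S : Set (EuclideanSpace ℝ (Fin m))) (ε : ℝ) (N : ℕ) : Prop :=
  ∃ v : Fin N → EuclideanSpace ℝ (Fin m), ∀ s ∈ S, ∃ i, ‖s - v i‖ ≤ ε

lemma mulVec_norm_le' {m n : ℕ} (A : Matrix (Fin m) (Fin n) ℝ)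
    (v : EuclideanSpace ℝ (Fin n)) :
    ‖(WithLp.toLp 2 (A.mulVec v) : EuclideanSpace ℝ (Fin m))‖ ≤ frob A * ‖v‖ := by
  rw [EuclideanSpace.norm_eq, EuclideanSpace.norm_eq, frob,
    ← Real.sqrt_mul (by positivity)]
  apply Real.sqrt_le_sqrt
  simp only [Real.norm_eq_abs, sq_abs]
  calc ∑ i, (A.mulVec v i) ^ 2
      = ∑ i, (∑ j, A i j * v j) ^ 2 := by rfl
    _ ≤ ∑ i, (∑ j, (A i j)^2) * (∑ j, (v j)^2) := by
        apply Finset.sum_le_sum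
        intro i _
        exact Finset.sum_mul_sq_le_sq_mul_sq Finset.univ _ _
    _ = (∑ i, ∑ j, (A i j)^2) * (∑ j, (v j)^2) := by rw [Finset.sum_mul]

theorem stmt_19 {dx dh dy : ℕ} (t : ℕ)
    (ρh ρy Bin Brec Bout BX ε : ℝ)
    (hρh : 0 ≤ ρh) (hρy : 0 ≤ ρy) (hε : 0 < ε) (hBout : 0 ≤ Bout)
    (hx : 1 < ρh * Brec)
    (σh : EuclideanSpace ℝ (Fin dh) → EuclideanSpace ℝ (Fin dh))
    (hσh : ∀ a b, ‖σh a - σh b‖ ≤ ρh * ‖a - b‖) (hσh0 : σh 0 = 0)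
    (σy : EuclideanSpace ℝ (Fin dy) → EuclideanSpace ℝ (Fin dy))
    (hσy : ∀ a b, ‖σy a - σy b‖ ≤ ρy * ‖a - b‖) (hσy0 : σy 0 = 0)
    (Win : Matrix (Fin dh) (Fin dx) ℝ) (hWin : frob Win ≤ Bin)
    (Wrec : Matrix (Fin dh) (Fin dh) ℝ) (hWrec : frob Wrec ≤ Brec)
    (X : ℕ → EuclideanSpace ℝ (Fin dx)) (hX : ∀ i, ‖X i‖ ≤ BX)
    (H : ℕ → EuclideanSpace ℝ (Fin dh)) (hH0 : H 0 = 0)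
    (hHrec : ∀ i, 1 ≤ i → H i =
      σh (WithLp.toLp 2
        (Win.mulVec (X i) + Wrec.mulVec (H (i - 1))) : EuclideanSpace ℝ (Fin dh)))
    -- Lemma 3.2 of Bartlett et al. (2017), assumed as a hypothesis:
    (bartlett : ∀ (d m : ℕ) (a b ε' : ℝ), 0 < ε' →
      ∀ Z : EuclideanSpace ℝ (Fin d), ‖Z‖ ≤ b →
      ∃ N : ℕ, 0 < N ∧
        HasCover {y : EuclideanSpace ℝ (Fin m) |
          ∃ Wmat : Matrix (Fin m) (Fin d) ℝ, frob Wmat ≤ a ∧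
            y = (WithLp.toLp 2 (Wmat.mulVec Z) : EuclideanSpace ℝ (Fin m))} ε' N ∧
        Real.log N ≤ a ^ 2 * b ^ 2 * (m : ℝ) / ε' ^ 2 * Real.log (2 * d * m)) :
    -- Proposition 2: covering-number bound for the ESN output class
    ∃ N : ℕ, 0 < N ∧
      HasCover {y : EuclideanSpace ℝ (Fin dy) |
        ∃ Wout : Matrix (Fin dy) (Fin dh) ℝ, frob Wout ≤ Bout ∧
          y = σy (WithLp.toLp 2 (Wout.mulVec (H t)) : EuclideanSpace ℝ (Fin dy))} ε N ∧
      Real.log N ≤ ρy ^ 2 * ρh ^ 2 * Bin ^ 2 * BX ^ 2 * Bout ^ 2 * (dy : ℝ) / ε ^ 2 *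
        (((ρh * Brec) ^ t - 1) / (ρh * Brec - 1)) ^ 2 * Real.log (2 * dh * dy) := by
  have hBin : 0 ≤ Bin := le_trans (Real.sqrt_nonneg _) hWin
  have hBrec : 0 ≤ Brec := le_trans (Real.sqrt_nonneg _) hWrec
  have hBX : 0 ≤ BX := le_trans (norm_nonneg _) (hX 0)
  have hσh' : ∀ a, ‖σh a‖ ≤ ρh * ‖a‖ := by
    intro a
    have := hσh a 0
    simpa [hσh0] using this
  set x := ρh * Brec with hxdef
  -- hidden-state bound by induction
  have hHb : ∀ i, ‖H i‖ ≤ ρh * Bin * BX * (∑ k ∈ Finset.range i, x ^ k) := by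
    intro i
    induction i with
    | zero => simp [hH0]
    | succ n ih =>
      have hSn : 0 ≤ ∑ k ∈ Finset.range n, x ^ k := by
        apply Finset.sum_nonneg
        intro k _
        positivity
      rw [hHrec (n + 1) (by omega)]
      simp only [Nat.add_sub_cancel]
      calc ‖σh (WithLp.toLp 2
              (Win.mulVec (X (n + 1)) + Wrec.mulVec (H n)) : EuclideanSpace ℝ (Fin dh))‖
          ≤ ρh * ‖(WithLp.toLp 2
              (Win.mulVec (X (n + 1)) + Wrec.mulVec (H n)) : EuclideanSpace ℝ (Fin dh))‖ := hσh' _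
        _ ≤ ρh * (‖(WithLp.toLp 2 (Win.mulVec (X (n + 1))) : EuclideanSpace ℝ (Fin dh))‖ +
              ‖(WithLp.toLp 2 (Wrec.mulVec (H n)) : EuclideanSpace ℝ (Fin dh))‖) := by
            gcongr
            rw [WithLp.toLp_add]
            exact norm_add_le _ _
        _ ≤ ρh * (Bin * BX + Brec * (ρh * Bin * BX * ∑ k ∈ Finset.range n, x ^ k)) := by
            gcongr ρh * (?_ + ?_)
            · exact (mulVec_norm_le' _ _).trans
                (mul_le_mul hWin (hX _) (norm_nonneg _) hBin)
            · exact (mulVec_norm_le' _ _).trans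
                (mul_le_mul hWrec ih (norm_nonneg _) hBrec)
        _ = ρh * Bin * BX * (x * (∑ k ∈ Finset.range n, x ^ k) + 1) := by
            rw [hxdef]; ring
        _ = ρh * Bin * BX * ∑ k ∈ Finset.range (n + 1), x ^ k := by
            rw [geom_sum_succ]
  have hxne : x ≠ 1 := ne_of_gt hx
  have hgsum : ∑ k ∈ Finset.range t, x ^ k = (x ^ t - 1) / (x - 1) := geom_sum_eq hxne t
  set g : ℝ := (x ^ t - 1) / (x - 1) with hgdef
  have hHt : ‖H t‖ ≤ ρh * Bin * BX * g := by
    rw [← hgsum]; exact hHb t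
  rcases eq_or_lt_of_le hρy with hρy0 | hρy0
  · -- degenerate case ρy = 0 : σy ≡ 0
    have hconst : ∀ a, σy a = 0 := by
      intro a
      have := hσy a 0
      rw [hσy0, sub_zero, ← hρy0, zero_mul] at this
      exact norm_le_zero_iff.mp this
    refine ⟨1, one_pos, ⟨fun _ => 0, ?_⟩, ?_⟩
    · rintro s ⟨W, hW, rfl⟩
      exact ⟨0, by simp [hconst, hε.le]⟩
    · rw [Nat.cast_one, Real.log_one, ← hρy0]
      simp
  · -- main case ρy > 0
    have hε' : 0 < ε / ρy := div_pos hε hρy0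
    obtain ⟨N, hN, ⟨v, hv⟩, hlog⟩ :=
      bartlett dh dy Bout (ρh * Bin * BX * g) (ε / ρy) hε' (H t) hHt
    refine ⟨N, hN, ⟨fun i => σy (v i), ?_⟩, ?_⟩
    · rintro s ⟨W, hW, rfl⟩
      obtain ⟨i, hi⟩ := hv _ ⟨W, hW, rfl⟩
      refine ⟨i, (hσy _ _).trans ?_⟩
      calc ρy * ‖(WithLp.toLp 2 (W.mulVec (H t)) : EuclideanSpace ℝ (Fin dy)) - v i‖
          ≤ ρy * (ε / ρy) := by gcongr
        _ = ε := by field_simp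
    · have hεne : ε ≠ 0 := ne_of_gt hε
      have hρyne : ρy ≠ 0 := ne_of_gt hρy0
      have hco : Bout ^ 2 * (ρh * Bin * BX * g) ^ 2 * (dy : ℝ) / (ε / ρy) ^ 2
          = ρy ^ 2 * ρh ^ 2 * Bin ^ 2 * BX ^ 2 * Bout ^ 2 * (dy : ℝ) / ε ^ 2 * g ^ 2 := by
        field_simp
      refine hlog.trans (le_of_eq ?_)
      rw [hco]
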